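/- Let d ≥ 1. The coefficient of the word 1122⋯dd (the concatenation of the blocks ii for i = 1,…,d) in inv(t_{1,d}) ⧢ inv(t_{1,d}) equals 2^d, and the coefficient of the same word in det_⧢(W_d) equals 1. -/

import Mathlib

set_option linter.unusedSectionVars false


open scoped BigOperators

namespace ShufflePaper

variable {α : Type*}

/-- All shuffles (interleavings) of two words, with multiplicity. -/
def shuffles : List α → List α → Multiset (List α)
  | [], ys => {ys}
  | x :: xs, [] => {x :: xs}
  | x :: xs, y :: ys =>
      ((shuffles xs (y :: ys)).map (x :: ·)) + ((shuffles (x :: xs) ys).map (y :: ·))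
  termination_by l₁ l₂ => l₁.length + l₂.length

/-- The element of the shuffle algebra corresponding to a multiset of words. -/
noncomputable def ofMS (m : Multiset (List α)) : List α →₀ ℝ :=
  (m.map fun l => Finsupp.single l (1 : ℝ)).sum

/-- The shuffle product on the shuffle algebra `T(ℝ^d)` (bilinear extension). -/
noncomputable def sh (x y : List α →₀ ℝ) : List α →₀ ℝ :=
  x.sum fun v a => y.sum fun w b => (a * b) • ofMS (shuffles v w)

/-- Iterated shuffle product of a list of elements (empty word is the unit). -/
noncomputable def shProd : List (List α →₀ ℝ) → (List α →₀ ℝ)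
  | [] => Finsupp.single [] 1
  | x :: xs => sh x (shProd xs)

/-- Determinant in the commutative ring `(T(ℝ^d), ⧢)` via the Leibniz formula. -/
noncomputable def detSh {n : ℕ} (M : Fin n → Fin n → (List α →₀ ℝ)) : List α →₀ ℝ :=
  ∑ σ : Equiv.Perm (Fin n), (Equiv.Perm.sign σ : ℤ) •
    shProd ((List.finRange n).map fun i => M (σ i) i)

/-- The matrix `W_d` whose `(i,j)` entry is the two-letter word `ij`. -/
noncomputable def W (d : ℕ) : Fin d → Fin d → (List (Fin d) →₀ ℝ) :=
  fun i j => Finsupp.single [i, j] 1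

/-- `inv(t_{1,d}) = Σ_σ sign(σ) σ(1)⋯σ(d)`. -/
noncomputable def invT1 (d : ℕ) : List (Fin d) →₀ ℝ :=
  ∑ σ : Equiv.Perm (Fin d), (Equiv.Perm.sign σ : ℤ) •
    Finsupp.single ((List.finRange d).map σ) 1

/-- `inv(t_{2,d}) = Σ_{σ,τ} sign(σ)sign(τ) σ(1)τ(1)⋯σ(d)τ(d)`. -/
noncomputable def invT2 (d : ℕ) : List (Fin d) →₀ ℝ :=
  ∑ σ : Equiv.Perm (Fin d), ∑ τ : Equiv.Perm (Fin d),
    ((Equiv.Perm.sign σ : ℤ) * (Equiv.Perm.sign τ : ℤ)) •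
      Finsupp.single ((List.finRange d).flatMap fun i => [σ i, τ i]) 1

/- Right half-shuffle of two words: `u ≻ (v·i) = (u ⧢ v)·i`; zero if the
second word is empty. -/
open Classical in
noncomputable def hsW (u w : List α) : List α →₀ ℝ :=
  if h : w = [] then 0
  else ofMS ((shuffles u w.dropLast).map fun l => l ++ [w.getLast h])

/-- Right half-shuffle product (bilinear extension). -/
noncomputable def hs (x y : List α →₀ ℝ) : List α →₀ ℝ :=
  x.sum fun v a => y.sum fun w b => (a * b) • hsW v w

/-- Iterated right half-shuffle of a list of words, bracketed from the left. -/
noncomputable def hsList : List (List α) → (List α →₀ ℝ)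
  | [] => 0
  | w :: ws => ws.foldl (fun acc u => hs acc (Finsupp.single u 1)) (Finsupp.single w 1)

/-- Action of `σ ∈ S_n` on the span of words, permuting letter positions of
words of length `n` (letter in position `σ(k)` of `σ·w` is `w_k`); words of
other lengths are left untouched. -/
noncomputable def permAct {d : ℕ} (n : ℕ) (σ : Equiv.Perm (Fin n))
    (x : List (Fin d) →₀ ℝ) : List (Fin d) →₀ ℝ :=
  x.sum fun w a =>
    if h : w.length = n then
      Finsupp.single (List.ofFn fun p : Fin n => w.get (Fin.cast h.symm (σ⁻¹ p))) a
    else Finsupp.single w a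

/-- The subgroup `H ≤ S_{2d}` generated by the transpositions `(2i−1, 2i+1)` and
`(2i, 2i+2)`, `1 ≤ i ≤ d−1` (0-indexed: all swaps `(k, k+2)` with `k+2 < 2d`). -/
def Hgrp (d : ℕ) : Subgroup (Equiv.Perm (Fin (2 * d))) :=
  Subgroup.closure
    {g | ∃ k : ℕ, ∃ hk : k + 2 < 2 * d, g = Equiv.swap ⟨k, by omega⟩ ⟨k + 2, hk⟩}

/-- Pfaffian in the shuffle algebra, via the sum over permutations. -/
noncomputable def pfSh {n : ℕ} (A : Fin n → Fin n → (List α →₀ ℝ)) : List α →₀ ℝ :=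
  ((2 ^ (n / 2) * (n / 2).factorial : ℝ))⁻¹ •
    ∑ π : Equiv.Perm (Fin n), (Equiv.Perm.sign π : ℤ) •
      shProd ((List.finRange (n / 2)).map fun i : Fin (n / 2) =>
        A (π ⟨2 * (i : ℕ), by have := i.isLt; omega⟩)
          (π ⟨2 * (i : ℕ) + 1, by have := i.isLt; omega⟩))

/-- The matrix `Z_d` from de Bruijn's formula, odd case. -/
noncomputable def Z (d : ℕ) : Fin (d + 1) → Fin (d + 1) → (List (Fin d) →₀ ℝ) :=
  fun i j =>
    if hi : (i : ℕ) < d then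
      if hj : (j : ℕ) < d then
        Finsupp.single [⟨i, hi⟩, ⟨j, hj⟩] 1 - Finsupp.single [⟨j, hj⟩, ⟨i, hi⟩] 1
      else Finsupp.single [⟨i, hi⟩] 1
    else if hj : (j : ℕ) < d then -Finsupp.single [⟨j, hj⟩] 1
    else 0

/-! ### Auxiliary lemmas -/

section Aux
open List

theorem shuffles_nil_left (v : List α) : shuffles ([] : List α) v = {v} := by rw [shuffles]

theorem mem_shuffles {l u v : List α} (h : l ∈ shuffles u v) :
    u.Sublist l ∧ v.Sublist l ∧ l.Perm (u ++ v) := by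
  induction u, v using shuffles.induct generalizing l with
  | case1 ys => simp only [shuffles, Multiset.mem_singleton] at h; subst h; simp
  | case2 x xs => simp only [shuffles, Multiset.mem_singleton] at h; subst h; simp
  | case3 x xs y ys ih1 ih2 =>
    rw [shuffles] at h
    simp only [Multiset.mem_add, Multiset.mem_map] at h
    rcases h with ⟨a, ha, rfl⟩ | ⟨a, ha, rfl⟩
    · obtain ⟨h1, h2, h3⟩ := ih1 ha
      exact ⟨h1.cons₂ x, h2.cons x, h3.cons x⟩
    · obtain ⟨h1, h2, h3⟩ := ih2 ha
      refine ⟨h1.cons y, h2.cons₂ y, ?_⟩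
      exact (h3.cons y).trans List.perm_middle.symm

variable [DecidableEq α]

theorem count_map_cons (a : α) (m : Multiset (List α)) (w : List α) :
    (m.map (a :: ·)).count (a :: w) = m.count w :=
  Multiset.count_map_eq_count' _ _ (fun _ _ h => by simpa using h) _

theorem count_map_cons_ne {a b : α} (h : b ≠ a) (m : Multiset (List α)) (w : List α) :
    (m.map (b :: ·)).count (a :: w) = 0 := by
  rw [Multiset.count_eq_zero]
  rintro hm
  rw [Multiset.mem_map] at hm
  obtain ⟨l, -, hl⟩ := hm
  exact h (by injection hl)

theorem step1 {a : α} {u : List α} (h : a ∉ u) (v w : List α) :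
    (shuffles u (a :: v)).count (a :: w) = (shuffles u v).count w := by
  cases u with
  | nil => simp [shuffles, Multiset.count_singleton]
  | cons b u' =>
    rw [shuffles]
    have hb : b ≠ a := fun e => h (e ▸ List.mem_cons_self (a := b) (l := u'))
    rw [Multiset.count_add, count_map_cons_ne hb, count_map_cons, zero_add]

theorem step1' {a : α} {v : List α} (h : a ∉ v) (u w : List α) :
    (shuffles (a :: u) v).count (a :: w) = (shuffles u v).count w := by
  cases v with
  | nil =>
    simp only [shuffles, Multiset.count_singleton]
    cases u with
    | nil => simp [shuffles, Multiset.count_singleton]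
    | cons c u' => simp [shuffles, Multiset.count_singleton]
  | cons b v' =>
    rw [shuffles]
    have hb : b ≠ a := fun e => h (e ▸ List.mem_cons_self (a := b) (l := v'))
    rw [Multiset.count_add, count_map_cons, count_map_cons_ne hb, add_zero]

theorem count_shuffles_doubled {xs : List α} (h : xs.Nodup) :
    (shuffles xs xs).count (xs.flatMap fun a => [a, a]) = 2 ^ xs.length := by
  induction xs with
  | nil => simp [shuffles]
  | cons a t ih =>
    have hat : a ∉ t := (List.nodup_cons.mp h).1
    have ht : t.Nodup := (List.nodup_cons.mp h).2
    have hw : ((a :: t).flatMap fun a => [a, a]) = a :: a :: (t.flatMap fun a => [a, a]) := by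
      simp
    rw [hw, shuffles, Multiset.count_add, count_map_cons, count_map_cons,
      step1 hat, step1' hat, ih ht, List.length_cons, pow_succ]
    ring

theorem ofMS_zero : ofMS (0 : Multiset (List α)) = 0 := by simp [ofMS]

theorem ofMS_cons (l : List α) (m : Multiset (List α)) :
    ofMS (l ::ₘ m) = Finsupp.single l 1 + ofMS m := by simp [ofMS]

theorem ofMS_apply (m : Multiset (List α)) (w : List α) :
    ofMS m w = (m.count w : ℝ) := by
  induction m using Multiset.induction with
  | empty => simp [ofMS]
  | cons a m ih =>
    rw [ofMS_cons, Finsupp.add_apply, ih, Multiset.count_cons]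
    rcases eq_or_ne w a with rfl | h
    · simp [Finsupp.single_apply]; ring
    · simp [Finsupp.single_apply, h, Ne.symm h]

theorem sh_zero_right (x : List α →₀ ℝ) : sh x 0 = 0 := by simp [sh]

theorem sh_zero_left (y : List α →₀ ℝ) : sh 0 y = 0 := by simp [sh]

theorem sh_add_right (x y z : List α →₀ ℝ) : sh x (y + z) = sh x y + sh x z := by
  unfold sh
  rw [← Finsupp.sum_add]
  apply Finsupp.sum_congr
  intro v _
  apply Finsupp.sum_add_index' <;> intro w <;> intros <;>
    simp [mul_add, add_smul]

theorem sh_add_left (x y z : List α →₀ ℝ) : sh (x + y) z = sh x z + sh y z := by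
  unfold sh
  apply Finsupp.sum_add_index' <;> intro v <;> intros <;>
    simp [add_mul, add_smul, Finsupp.sum_add]

theorem sh_single_single (u v : List α) (a b : ℝ) :
    sh (Finsupp.single u a) (Finsupp.single v b) = (a * b) • ofMS (shuffles u v) := by
  unfold sh
  rw [Finsupp.sum_single_index, Finsupp.sum_single_index]
  · simp
  · simp [Finsupp.sum_single_index]

theorem sh_sum_left {ι : Type*} (s : Finset ι) (f : ι → (List α →₀ ℝ)) (y : List α →₀ ℝ) :
    sh (∑ i ∈ s, f i) y = ∑ i ∈ s, sh (f i) y := by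
  classical
  induction s using Finset.induction with
  | empty => simp [sh_zero_left]
  | insert _ _ hns ih => rw [Finset.sum_insert hns, Finset.sum_insert hns, sh_add_left, ih]

theorem sh_sum_right {ι : Type*} (s : Finset ι) (x : List α →₀ ℝ) (f : ι → (List α →₀ ℝ)) :
    sh x (∑ i ∈ s, f i) = ∑ i ∈ s, sh x (f i) := by
  classical
  induction s using Finset.induction with
  | empty => simp [sh_zero_right]
  | insert _ _ hns ih => rw [Finset.sum_insert hns, Finset.sum_insert hns, sh_add_right, ih]

theorem sh_single_ofMS (u : List α) (m : Multiset (List α)) :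
    sh (Finsupp.single u 1) (ofMS m) = ofMS (m.bind (shuffles u)) := by
  induction m using Multiset.induction with
  | empty => simp [ofMS_zero, sh_zero_right, Multiset.zero_bind]
  | cons l m ih =>
    rw [ofMS_cons, sh_add_right, ih, sh_single_single, Multiset.cons_bind,
      one_mul, one_smul]
    unfold ofMS
    rw [Multiset.map_add, Multiset.sum_add]

/-- Iterated shuffles of a list of words, as a multiset. -/
def mShuffles : List (List α) → Multiset (List α)
  | [] => {[]}
  | u :: L => (mShuffles L).bind (shuffles u)

theorem shProd_singles (L : List (List α)) :
    shProd (L.map fun u => Finsupp.single u (1 : ℝ)) = ofMS (mShuffles L) := by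
  induction L with
  | nil => simp [shProd, mShuffles, ofMS]
  | cons u L ih =>
    rw [List.map_cons]
    show sh _ _ = _
    rw [ih, sh_single_ofMS]
    rfl

theorem mem_mShuffles_sublist {l : List α} {L : List (List α)}
    (h : l ∈ mShuffles L) : ∀ u ∈ L, u.Sublist l := by
  induction L generalizing l with
  | nil => simp
  | cons u L ih =>
    rw [mShuffles, Multiset.mem_bind] at h
    obtain ⟨v, hv, hl⟩ := h
    obtain ⟨h1, h2, -⟩ := mem_shuffles hl
    intro u' hu'
    rcases List.mem_cons.mp hu' with rfl | hu'
    · exact h1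
    · exact (ih hv u' hu').trans h2

theorem mem_mShuffles_perm {l : List α} {L : List (List α)}
    (h : l ∈ mShuffles L) : l.Perm L.flatten := by
  induction L generalizing l with
  | nil => simp only [mShuffles, Multiset.mem_singleton] at h; subst h; simp
  | cons u L ih =>
    rw [mShuffles, Multiset.mem_bind] at h
    obtain ⟨v, hv, hl⟩ := h
    obtain ⟨-, -, h3⟩ := mem_shuffles hl
    exact h3.trans ((ih hv).append_left u)

theorem sum_indicator_count (w : List α) (m : Multiset (List α)) :
    (m.map fun v => if w = v then 1 else 0).sum = m.count w := by
  induction m using Multiset.induction with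
  | empty => simp
  | cons a m ih =>
    rw [Multiset.map_cons, Multiset.sum_cons, ih, Multiset.count_cons, add_comm]

theorem count_mShuffles_doubled {xs : List α} (h : xs.Nodup) :
    (mShuffles (xs.map fun a => [a, a])).count (xs.flatMap fun a => [a, a]) = 1 := by
  induction xs with
  | nil => simp [mShuffles]
  | cons a t ih =>
    have hat : a ∉ t := (List.nodup_cons.mp h).1
    have ht : t.Nodup := (List.nodup_cons.mp h).2
    have hw : ((a :: t).flatMap fun a => [a, a]) = a :: a :: (t.flatMap fun a => [a, a]) := by
      simp
    rw [List.map_cons, mShuffles, hw, Multiset.count_bind]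
    have hcongr : ∀ v ∈ mShuffles (t.map fun a => [a, a]),
        (shuffles [a, a] v).count (a :: a :: t.flatMap fun a => [a, a]) =
        (if (t.flatMap fun a => [a, a]) = v then 1 else 0) := by
      intro v hv
      have hav : a ∉ v := by
        intro hav
        have hp := mem_mShuffles_perm hv
        have : a ∈ (t.map fun a => [a, a]).flatten := hp.subset hav
        simp only [List.mem_flatten, List.mem_map] at this
        obtain ⟨l, ⟨b, hb, rfl⟩, hal⟩ := this
        simp only [List.mem_cons, List.not_mem_nil, or_false] at hal
        rcases hal with rfl | rfl <;> exact hat hb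
      rw [step1' hav, step1' hav, shuffles_nil_left, Multiset.count_singleton]
    rw [Multiset.map_congr rfl hcongr, sum_indicator_count, ih ht]

end Aux


section Main
open List

theorem sorted_flatMap_doubled {β : Type*} [Preorder β] {xs : List β}
    (h : xs.Pairwise (· ≤ ·)) :
    (xs.flatMap fun a => [a, a]).Pairwise (· ≤ ·) := by
  induction xs with
  | nil => simp
  | cons a t ih =>
    rw [List.pairwise_cons] at h
    have he : ((a :: t).flatMap fun a => [a, a]) = a :: a :: (t.flatMap fun a => [a, a]) := by
      simp
    rw [he]
    have hmem : ∀ b ∈ t.flatMap fun a => [a, a], a ≤ b := by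
      intro b hb
      rw [List.mem_flatMap] at hb
      obtain ⟨c, hc, hbc⟩ := hb
      simp only [List.mem_cons, List.not_mem_nil, or_false] at hbc
      rcases hbc with rfl | rfl <;> exact h.1 _ hc
    refine List.Pairwise.cons ?_ (List.Pairwise.cons hmem (ih h.2))
    intro b hb
    rcases List.mem_cons.mp hb with rfl | hb
    · exact le_refl b
    · exact hmem b hb

theorem map_perm_eq_finRange {d : ℕ} {σ : Equiv.Perm (Fin d)}
    (h : (List.Sublist ((List.finRange d).map σ)
      ((List.finRange d).flatMap fun i => [i, i]))) : σ = 1 := by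
  have hw : (((List.finRange d).flatMap fun i => [i, i]) : List (Fin d)).Pairwise (· ≤ ·) :=
    sorted_flatMap_doubled (List.pairwise_le_finRange d)
  have hu : ((List.finRange d).map σ).Nodup := (List.nodup_finRange d).map σ.injective
  have hsort : ((List.finRange d).map σ).Pairwise (· ≤ ·) := hw.sublist h
  have hperm : ((List.finRange d).map σ).Perm (List.finRange d) := by
    rw [List.perm_ext_iff_of_nodup hu (List.nodup_finRange d)]
    intro x
    simp only [List.mem_map, List.mem_finRange, iff_true]
    exact ⟨σ⁻¹ x, trivial, by simp⟩
  have heq : (List.finRange d).map σ = List.finRange d :=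
    List.Perm.eq_of_pairwise' hsort (List.pairwise_le_finRange d) hperm
  have h1 : List.ofFn (⇑σ ∘ id) = List.map (⇑σ) (List.ofFn (id : Fin d → Fin d)) :=
    (List.map_ofFn (f := id) (g := ⇑σ)).symm
  rw [List.ofFn_id, heq] at h1
  have h2 : List.ofFn (⇑σ) = List.ofFn (id : Fin d → Fin d) := by
    rw [List.ofFn_id]; exact h1
  exact Equiv.coe_fn_injective (List.ofFn_injective h2)

theorem exists_lt_of_ne_one {d : ℕ} {σ : Equiv.Perm (Fin d)} (h : σ ≠ 1) :
    ∃ i : Fin d, i < σ i := by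
  classical
  have hne : (Finset.univ.filter fun i : Fin d => σ i ≠ i).Nonempty := by
    rcases Finset.eq_empty_or_nonempty (Finset.univ.filter fun i : Fin d => σ i ≠ i)
      with he | hne
    · exfalso
      apply h
      ext i
      have hni : i ∉ Finset.univ.filter fun i : Fin d => σ i ≠ i :=
        he ▸ Finset.notMem_empty i
      simp only [Finset.mem_filter, Finset.mem_univ, true_and, not_not] at hni
      simp [hni]
    · exact hne
  set s := Finset.univ.filter fun i : Fin d => σ i ≠ i with hs
  set m := s.min' hne with hm
  have hmem : m ∈ s := s.min'_mem hne
  have hmne : σ m ≠ m := (Finset.mem_filter.mp hmem).2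
  have hσm : σ m ∈ s := by
    simp only [hs, Finset.mem_filter, Finset.mem_univ, true_and]
    intro he
    exact hmne (σ.injective he)
  exact ⟨m, lt_of_le_of_ne (s.min'_le _ hσm) (Ne.symm hmne)⟩

/-- the coefficient of the word `1122⋯dd` in
`inv(t_{1,d}) ⧢ inv(t_{1,d})` is `2^d`, and in `det_⧢(W_d)` it is `1`. -/
theorem coeff_of_word_1122dd (d : ℕ) (hd : 1 ≤ d) :
    (sh (invT1 d) (invT1 d)) ((List.finRange d).flatMap fun i => [i, i]) =
        2 ^ d ∧
      (detSh (W d)) ((List.finRange d).flatMap fun i => [i, i]) = 1 := by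
  classical
  set w : List (Fin d) := (List.finRange d).flatMap fun i => [i, i] with hwdef
  have hwsorted : w.Pairwise (· ≤ ·) := sorted_flatMap_doubled (List.pairwise_le_finRange d)
  constructor
  · -- first part
    have hinv : invT1 d = ∑ σ : Equiv.Perm (Fin d),
        Finsupp.single ((List.finRange d).map σ) (((Equiv.Perm.sign σ : ℤ) : ℝ)) := by
      unfold invT1
      refine Finset.sum_congr rfl fun σ _ => ?_
      rw [Finsupp.smul_single]
      norm_num
    rw [hinv, sh_sum_left]
    rw [Finsupp.finset_sum_apply]
    have hterm : ∀ σ : Equiv.Perm (Fin d),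
        (sh (Finsupp.single ((List.finRange d).map σ) (((Equiv.Perm.sign σ : ℤ) : ℝ)))
          (∑ τ : Equiv.Perm (Fin d),
            Finsupp.single ((List.finRange d).map τ) (((Equiv.Perm.sign τ : ℤ) : ℝ)))) w
        = ∑ τ : Equiv.Perm (Fin d),
            (((Equiv.Perm.sign σ : ℤ) : ℝ) * ((Equiv.Perm.sign τ : ℤ) : ℝ)) *
              (((shuffles ((List.finRange d).map σ) ((List.finRange d).map τ)).count w : ℕ) : ℝ) := by
      intro σ
      rw [sh_sum_right, Finsupp.finset_sum_apply]
      refine Finset.sum_congr rfl fun τ _ => ?_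
      rw [sh_single_single, Finsupp.smul_apply, ofMS_apply, smul_eq_mul]
    have hvanish : ∀ σ τ : Equiv.Perm (Fin d), (σ ≠ 1 ∨ τ ≠ 1) →
        ((shuffles ((List.finRange d).map σ) ((List.finRange d).map τ)).count w) = 0 := by
      intro σ τ hστ
      rw [Multiset.count_eq_zero]
      intro hmem
      obtain ⟨h1, h2, -⟩ := mem_shuffles hmem
      rcases hστ with h | h
      · exact h (map_perm_eq_finRange h1)
      · exact h (map_perm_eq_finRange h2)
    rw [Finset.sum_congr rfl fun σ _ => hterm σ]
    rw [Finset.sum_eq_single (1 : Equiv.Perm (Fin d))]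
    · rw [Finset.sum_eq_single (1 : Equiv.Perm (Fin d))]
      · have hmap : (List.finRange d).map (⇑(1 : Equiv.Perm (Fin d))) = List.finRange d := by
          simp
        rw [hmap, hwdef]
        rw [count_shuffles_doubled (List.nodup_finRange d)]
        simp [List.length_finRange]
      · intro τ _ hτ
        rw [hvanish 1 τ (Or.inr hτ)]
        simp
      · intro h; exact absurd (Finset.mem_univ _) h
    · intro σ _ hσ
      refine Finset.sum_eq_zero fun τ _ => ?_
      rw [hvanish σ τ (Or.inl hσ)]
      simp
    · intro h; exact absurd (Finset.mem_univ _) h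
  · -- second part
    unfold detSh
    rw [Finsupp.finset_sum_apply]
    have hterm : ∀ σ : Equiv.Perm (Fin d),
        (((Equiv.Perm.sign σ : ℤ)) •
          shProd ((List.finRange d).map fun i => W d (σ i) i)) w
        = ((Equiv.Perm.sign σ : ℤ) : ℝ) *
            (((mShuffles ((List.finRange d).map fun i => [σ i, i])).count w : ℕ) : ℝ) := by
      intro σ
      have hmap : ((List.finRange d).map fun i => W d (σ i) i) =
          (((List.finRange d).map fun i => [σ i, i]).map fun u => Finsupp.single u (1 : ℝ)) := by
        rw [List.map_map]
        rfl
      rw [hmap, shProd_singles, Finsupp.smul_apply, ofMS_apply, zsmul_eq_mul]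
    rw [Finset.sum_congr rfl fun σ _ => hterm σ]
    rw [Finset.sum_eq_single (1 : Equiv.Perm (Fin d))]
    · have hmap : ((List.finRange d).map fun i => [(1 : Equiv.Perm (Fin d)) i, i]) =
          (List.finRange d).map fun i => [i, i] := by simp
      rw [hmap, hwdef, count_mShuffles_doubled (List.nodup_finRange d)]
      simp
    · intro σ _ hσ
      have hcount : (mShuffles ((List.finRange d).map fun i => [σ i, i])).count w = 0 := by
        rw [Multiset.count_eq_zero]
        intro hmem
        obtain ⟨i, hi⟩ := exists_lt_of_ne_one hσ
        have hin : [σ i, i] ∈ (List.finRange d).map fun i => [σ i, i] :=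
          List.mem_map.mpr ⟨i, List.mem_finRange i, rfl⟩
        have hsub := mem_mShuffles_sublist hmem _ hin
        have hpair : ([σ i, i] : List (Fin d)).Pairwise (· ≤ ·) := hwsorted.sublist hsub
        rw [List.pairwise_cons] at hpair
        exact absurd (hpair.1 i (List.mem_singleton_self i)) (not_le.mpr hi)
      rw [hcount]
      simp
    · intro h; exact absurd (Finset.mem_univ _) h

end Main

end ShufflePaper
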